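/- Let ξ(t) = (2π)^{-1/2} t^{-1/2} e^{-t/2} be the density of the χ²₁ distribution and Ξ its CDF, and let φ, Φ be the standard normal density and CDF. Then the function h(t) = ξ(t)/φ(Φ⁻¹(1 - Ξ(t))) satisfies lim_{t→∞} h(t) = 0. -/

import Mathlib

set_option maxHeartbeats 1000000

open MeasureTheory Set Real Filter

/-- The standard normal density. -/
noncomputable def stdNormalPDF (x : ℝ) : ℝ := (Real.sqrt (2 * π))⁻¹ * Real.exp (-x ^ 2 / 2)

/-- The standard normal CDF. -/
noncomputable def stdNormalCDF (x : ℝ) : ℝ := ∫ t in Iic x, stdNormalPDF t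

/-- The χ²₁ density. -/
noncomputable def chiSq1PDF (t : ℝ) : ℝ :=
  (Real.sqrt (2 * π))⁻¹ * t ^ (-(1 / 2 : ℝ)) * Real.exp (-t / 2)

/-- The χ²₁ CDF. -/
noncomputable def chiSq1CDF (t : ℝ) : ℝ := ∫ s in Ioc (0 : ℝ) t, chiSq1PDF s

lemma pdf_pos (x : ℝ) : 0 < stdNormalPDF x := by
  unfold stdNormalPDF
  positivity

lemma pdf_even (x : ℝ) : stdNormalPDF (-x) = stdNormalPDF x := by
  unfold stdNormalPDF; rw [neg_pow]; norm_num

lemma pdf_integrable : Integrable stdNormalPDF := by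
  have h := (integrable_exp_neg_mul_sq (by norm_num : (0:ℝ) < 1/2)).const_mul (Real.sqrt (2 * π))⁻¹
  refine h.congr (Eventually.of_forall fun x => ?_)
  unfold stdNormalPDF; ring_nf

lemma hasDerivAt_neg_pdf (x : ℝ) :
    HasDerivAt (fun y => -stdNormalPDF y) (x * stdNormalPDF x) x := by
  have h1 : HasDerivAt (fun y : ℝ => -y ^ 2 / 2) (-x) x := by
    have := ((hasDerivAt_pow 2 x).neg.div_const 2)
    exact this.congr_deriv (by norm_num; ring)
  have h2 := (h1.exp.const_mul (Real.sqrt (2 * π))⁻¹).neg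
  refine h2.congr_deriv ?_
  unfold stdNormalPDF; ring

lemma pdf_tendsto_atTop : Tendsto stdNormalPDF atTop (nhds 0) := by
  have h1 : Tendsto (fun x : ℝ => -x ^ 2 / 2) atTop atBot := by
    apply Tendsto.atBot_div_const (by norm_num)
    exact tendsto_neg_atBot_iff.mpr (tendsto_pow_atTop (by norm_num))
  have h2 := Real.tendsto_exp_atBot.comp h1
  have := h2.const_mul (Real.sqrt (2 * π))⁻¹
  rw [mul_zero] at this
  exact this.congr fun x => by simp [stdNormalPDF, Function.comp]

lemma gauss_mul_integrableOn {a : ℝ} (ha : 0 ≤ a) :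
    IntegrableOn (fun s => s * stdNormalPDF s) (Ioi a) := by
  refine integrableOn_Ioi_deriv_of_nonneg' (g := fun y => -stdNormalPDF y)
    (fun x _ => hasDerivAt_neg_pdf x) (fun x hx => ?_) (l := 0) ?_
  · exact mul_nonneg (le_of_lt (lt_of_le_of_lt ha hx)) (pdf_pos x).le
  · simpa using pdf_tendsto_atTop.neg

lemma gauss_mul_integral {a : ℝ} (ha : 0 ≤ a) :
    ∫ s in Ioi a, s * stdNormalPDF s = stdNormalPDF a := by
  have := integral_Ioi_of_hasDerivAt_of_nonneg' (g := fun y => -stdNormalPDF y)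
    (g' := fun s => s * stdNormalPDF s)
    (fun x _ => hasDerivAt_neg_pdf x)
    (fun x hx => mul_nonneg (le_of_lt (lt_of_le_of_lt ha hx)) (pdf_pos x).le)
    (l := 0) (by simpa using pdf_tendsto_atTop.neg)
  simpa using this

lemma cdf_eq_tail (q : ℝ) : stdNormalCDF q = ∫ x in Ioi (-q), stdNormalPDF x := by
  unfold stdNormalCDF
  rw [← integral_comp_neg_Iic]
  exact setIntegral_congr_fun measurableSet_Iic fun x _ => (pdf_even x).symm

lemma total_mass : ∫ x, stdNormalPDF x = 1 := by
  have h : ∀ x : ℝ, stdNormalPDF x = (Real.sqrt (2 * π))⁻¹ * Real.exp (-(1/2) * x ^ 2) := by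
    intro x; unfold stdNormalPDF; ring_nf
  simp_rw [h]
  rw [MeasureTheory.integral_const_mul, integral_gaussian]
  rw [show π / (1/2 : ℝ) = 2 * π by ring]
  rw [inv_mul_cancel₀ (Real.sqrt_ne_zero'.mpr (by positivity))]

lemma cdf_nonneg (x : ℝ) : 0 ≤ stdNormalCDF x :=
  setIntegral_nonneg measurableSet_Iic fun y _ => (pdf_pos y).le

lemma cdf_add_symm (x : ℝ) : stdNormalCDF x + stdNormalCDF (-x) = 1 := by
  rw [cdf_eq_tail (-x), neg_neg]
  unfold stdNormalCDF
  rw [← total_mass, ← setIntegral_union (Iic_disjoint_Ioi le_rfl) measurableSet_Ioi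
      (pdf_integrable.integrableOn) (pdf_integrable.integrableOn), Iic_union_Ioi,
    setIntegral_univ]

lemma cdf_strictMono : StrictMono stdNormalCDF := by
  intro a b hab
  have key : stdNormalCDF b - stdNormalCDF a = ∫ x in a..b, stdNormalPDF x :=
    intervalIntegral.integral_Iic_sub_Iic pdf_integrable.integrableOn pdf_integrable.integrableOn
  have hpos : 0 < ∫ x in a..b, stdNormalPDF x :=
    intervalIntegral.intervalIntegral_pos_of_pos pdf_integrable.intervalIntegrable pdf_pos hab
  linarith
lemma cdf_lt_one (x : ℝ) : stdNormalCDF x < 1 := by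
  have := cdf_add_symm x
  have h2 := cdf_strictMono (show -x - 1 < -x by linarith)
  have h3 := cdf_nonneg (-x - 1)
  linarith

lemma cdf_pos (x : ℝ) : 0 < stdNormalCDF x := by
  have := cdf_add_symm x
  have := cdf_lt_one (-x)
  linarith

lemma cdf_continuous : Continuous stdNormalCDF := by
  have h : ∀ x : ℝ, stdNormalCDF x = stdNormalCDF 0 + ∫ t in (0:ℝ)..x, stdNormalPDF t := by
    intro x
    have := intervalIntegral.integral_Iic_sub_Iic (f := stdNormalPDF) (μ := volume) (a := (0:ℝ)) (b := x)
      pdf_integrable.integrableOn pdf_integrable.integrableOn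
    unfold stdNormalCDF; rw [← this]; ring
  have hc : Continuous fun x : ℝ => stdNormalCDF 0 + ∫ t in (0:ℝ)..x, stdNormalPDF t :=
    continuous_const.add (intervalIntegral.continuous_primitive
      (fun a b => pdf_integrable.intervalIntegrable) 0)
  exact hc.congr fun x => (h x).symm

/-- Mills upper bound: for q < 0, (-q) * Φ(q) ≤ φ(q). -/
lemma mills (q : ℝ) (hq : q < 0) : (-q) * stdNormalCDF q ≤ stdNormalPDF q := by
  set x := -q with hx
  have hx0 : 0 < x := by simp [hx]; linarith
  have h1 : stdNormalCDF q = ∫ s in Ioi x, stdNormalPDF s := cdf_eq_tail q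
  have h2 : ∫ s in Ioi x, stdNormalPDF s ≤ ∫ s in Ioi x, x⁻¹ * (s * stdNormalPDF s) := by
    apply setIntegral_mono_on pdf_integrable.integrableOn
      ((gauss_mul_integrableOn hx0.le).const_mul x⁻¹) measurableSet_Ioi
    intro s hs
    rw [mem_Ioi] at hs
    have h3 : (1:ℝ) ≤ x⁻¹ * s := by
      rw [← div_eq_inv_mul, le_div_iff₀ hx0]; linarith
    calc stdNormalPDF s = 1 * stdNormalPDF s := (one_mul _).symm
      _ ≤ (x⁻¹ * s) * stdNormalPDF s := by
          apply mul_le_mul_of_nonneg_right h3 (pdf_pos s).le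
      _ = x⁻¹ * (s * stdNormalPDF s) := by ring
  rw [MeasureTheory.integral_const_mul, gauss_mul_integral hx0.le] at h2
  have h4 : stdNormalPDF x = stdNormalPDF q := by rw [hx, pdf_even]
  rw [h4] at h2
  have := mul_le_mul_of_nonneg_left h2 hx0.le
  rw [← mul_assoc, mul_inv_cancel₀ hx0.ne', one_mul] at this
  rw [h1]
  exact this

lemma cdf_tendsto_atBot : Tendsto stdNormalCDF atBot (nhds 0) := by
  apply squeeze_zero' (Eventually.of_forall cdf_nonneg)
    (g := fun q => (-q)⁻¹ * stdNormalPDF q)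
  · filter_upwards [eventually_lt_atBot (0:ℝ)] with q hq
    have h := mills q hq
    have hq' : 0 < -q := by linarith
    rw [← le_div_iff₀' hq'] at h
    rw [div_eq_inv_mul] at h
    exact h
  · have h1 : Tendsto (fun q : ℝ => (-q)⁻¹) atBot (nhds 0) := by
      apply Tendsto.inv_tendsto_atTop
      exact tendsto_neg_atBot_atTop
    have h2 : Tendsto stdNormalPDF atBot (nhds 0) := by
      have := pdf_tendsto_atTop.comp tendsto_neg_atBot_atTop
      exact this.congr fun x => pdf_even x
    simpa using h1.mul h2

lemma cdf_tendsto_atTop : Tendsto stdNormalCDF atTop (nhds 1) := by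
  have h : ∀ x : ℝ, stdNormalCDF x = 1 - stdNormalCDF (-x) := fun x => by
    have := cdf_add_symm x; linarith
  have h2 : Tendsto (fun x => 1 - stdNormalCDF (-x)) atTop (nhds (1 - 0)) :=
    tendsto_const_nhds.sub (cdf_tendsto_atBot.comp tendsto_neg_atTop_atBot)
  norm_num at h2
  exact h2.congr fun x => (h x).symm

lemma cdf_surj {u : ℝ} (h0 : 0 < u) (h1 : u < 1) : ∃ q, stdNormalCDF q = u := by
  obtain ⟨a, ha⟩ := (cdf_tendsto_atBot.eventually_lt_const h0).exists
  obtain ⟨b, hb⟩ := (cdf_tendsto_atTop.eventually_const_lt h1).exists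
  have hab : a ≤ b := by
    by_contra hc
    push_neg at hc
    exact absurd (cdf_strictMono hc) (by linarith)
  have := intermediate_value_Icc hab cdf_continuous.continuousOn
  obtain ⟨q, _, hq⟩ := this ⟨ha.le, hb.le⟩
  exact ⟨q, hq⟩

lemma chiSq_pos {t : ℝ} (ht : 0 < t) : 0 < chiSq1PDF t := by
  unfold chiSq1PDF
  have := Real.rpow_pos_of_pos ht (-(1/2 : ℝ))
  positivity

lemma chiSq_measurable : Measurable chiSq1PDF := by
  unfold chiSq1PDF; fun_prop

lemma chiSq_tendsto_atTop : Tendsto chiSq1PDF atTop (nhds 0) := by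
  have h1 : Tendsto (fun s : ℝ => s ^ (-(1/2 : ℝ))) atTop (nhds 0) :=
    tendsto_rpow_neg_atTop (by norm_num)
  have h2 : Tendsto (fun s : ℝ => Real.exp (-s / 2)) atTop (nhds 0) := by
    apply Real.tendsto_exp_atBot.comp
    apply Tendsto.atBot_div_const (by norm_num)
    exact tendsto_neg_atBot_iff.mpr tendsto_id
  have h3 := (h1.mul h2).const_mul (Real.sqrt (2 * π))⁻¹
  rw [mul_zero, mul_zero] at h3
  exact h3.congr fun s => by unfold chiSq1PDF; ring

lemma hasDerivAt_chiSqF {s : ℝ} (hs : 0 < s) :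
    HasDerivAt (fun y => -2 * chiSq1PDF y) (chiSq1PDF s * (1 + 1/s)) s := by
  have h1 : HasDerivAt (fun y : ℝ => y ^ (-(1/2 : ℝ)))
      (-(1/2 : ℝ) * s ^ (-(1/2 : ℝ) - 1)) s := hasDerivAt_rpow_const (Or.inl hs.ne')
  have h2 : HasDerivAt (fun y : ℝ => Real.exp (-y / 2)) (Real.exp (-s / 2) * (-(1/2))) s := by
    have : HasDerivAt (fun y : ℝ => -y / 2) (-(1/2)) s := by
      have := ((hasDerivAt_id s).neg.div_const 2)
      exact this.congr_deriv (by norm_num)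
    exact this.exp
  have h3 := ((h1.mul h2).const_mul ((Real.sqrt (2 * π))⁻¹)).const_mul (-2 : ℝ)
  have key : s ^ (-(1/2 : ℝ) - 1) = s ^ (-(1/2 : ℝ)) * s⁻¹ := by
    rw [show (-(1/2 : ℝ) - 1) = -(1/2 : ℝ) + (-1) by ring, Real.rpow_add hs, Real.rpow_neg_one]
  have hfun : (fun y => -2 * chiSq1PDF y)
      = (fun y : ℝ => -2 * ((Real.sqrt (2*π))⁻¹ * (y ^ (-(1/2:ℝ)) * Real.exp (-y/2)))) := by
    funext y; simp only [chiSq1PDF]; ring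
  rw [hfun]
  refine h3.congr_deriv ?_
  simp only [chiSq1PDF]
  rw [key]
  field_simp
  ring

lemma chiSq_aux_integrableOn {t : ℝ} (ht : 0 < t) :
    IntegrableOn (fun s => chiSq1PDF s * (1 + 1/s)) (Ioi t) := by
  refine integrableOn_Ioi_deriv_of_nonneg' (g := fun y => -2 * chiSq1PDF y)
    (fun x hx => hasDerivAt_chiSqF (lt_of_lt_of_le ht hx)) (fun x hx => ?_) (l := 0) ?_
  · have hx0 : 0 < x := lt_trans ht hx
    have h1 : (0:ℝ) ≤ 1 + 1/x := by positivity
    exact mul_nonneg (chiSq_pos hx0).le h1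
  · simpa using chiSq_tendsto_atTop.const_mul (-2 : ℝ)

lemma chiSq_aux_integral {t : ℝ} (ht : 0 < t) :
    ∫ s in Ioi t, chiSq1PDF s * (1 + 1/s) = 2 * chiSq1PDF t := by
  have := integral_Ioi_of_hasDerivAt_of_nonneg' (g := fun y => -2 * chiSq1PDF y)
    (g' := fun s => chiSq1PDF s * (1 + 1/s))
    (fun x hx => hasDerivAt_chiSqF (lt_of_lt_of_le ht hx))
    (fun x hx => mul_nonneg (chiSq_pos (lt_trans ht hx)).le
      (by have hx0 : (0:ℝ) < x := lt_trans ht hx; positivity))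
    (l := 0) (by simpa using chiSq_tendsto_atTop.const_mul (-2 : ℝ))
  rw [this]; ring

lemma chiSq_integrableOn_Ioi {t : ℝ} (ht : 0 < t) : IntegrableOn chiSq1PDF (Ioi t) := by
  refine (chiSq_aux_integrableOn ht).mono' chiSq_measurable.aestronglyMeasurable.restrict ?_
  rw [ae_restrict_iff' measurableSet_Ioi]
  refine Eventually.of_forall fun s hs => ?_
  have hs0 : 0 < s := lt_trans ht hs
  rw [Real.norm_eq_abs, abs_of_nonneg (chiSq_pos hs0).le]
  nth_rewrite 1 [← mul_one (chiSq1PDF s)]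
  apply mul_le_mul_of_nonneg_left _ (chiSq_pos hs0).le
  have : (0:ℝ) < 1/s := by positivity
  linarith

lemma chiSq_tail_upper {t : ℝ} (ht : 0 < t) :
    ∫ s in Ioi t, chiSq1PDF s ≤ 2 * chiSq1PDF t := by
  rw [← chiSq_aux_integral ht]
  apply setIntegral_mono_on (chiSq_integrableOn_Ioi ht) (chiSq_aux_integrableOn ht)
    measurableSet_Ioi
  intro s hs
  have hs0 : 0 < s := lt_trans ht hs
  nth_rewrite 1 [← mul_one (chiSq1PDF s)]
  apply mul_le_mul_of_nonneg_left _ (chiSq_pos hs0).le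
  have : (0:ℝ) < 1/s := by positivity
  linarith

lemma chiSq_tail_lower {t : ℝ} (ht : 0 < t) :
    t / (t + 1) * (2 * chiSq1PDF t) ≤ ∫ s in Ioi t, chiSq1PDF s := by
  rw [← chiSq_aux_integral ht, ← MeasureTheory.integral_const_mul]
  apply setIntegral_mono_on ((chiSq_aux_integrableOn ht).const_mul _)
    (chiSq_integrableOn_Ioi ht) measurableSet_Ioi
  intro s hs
  rw [mem_Ioi] at hs
  have hs0 : 0 < s := lt_trans ht hs
  have h1 : t / (t + 1) * (1 + 1/s) ≤ 1 := by
    rw [div_mul_eq_mul_div, div_le_one (by linarith)]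
    have : t / s ≤ 1 := (div_le_one hs0).mpr hs.le
    have expand : t * (1 + 1/s) = t + t/s := by rw [mul_add, mul_one, mul_one_div]
    linarith [expand]
  calc t / (t + 1) * (chiSq1PDF s * (1 + 1/s))
      = (t / (t + 1) * (1 + 1/s)) * chiSq1PDF s := by ring
    _ ≤ 1 * chiSq1PDF s := mul_le_mul_of_nonneg_right h1 (chiSq_pos hs0).le
    _ = chiSq1PDF s := one_mul _

lemma chiSq_total_mass : ∫ s in Ioi (0:ℝ), chiSq1PDF s = 1 := by
  rw [← integral_comp_rpow_Ioi chiSq1PDF (p := 2) (by norm_num)]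
  have key : ∀ x ∈ Ioi (0:ℝ), (|(2:ℝ)| * x ^ ((2:ℝ) - 1)) • chiSq1PDF (x ^ (2:ℝ))
      = 2 * ((Real.sqrt (2 * π))⁻¹ * Real.exp (-(1/2) * x ^ 2)) := by
    intro x hx
    rw [mem_Ioi] at hx
    have h1 : x ^ ((2:ℝ) - 1) = x := by norm_num
    have h2 : x ^ (2:ℝ) = x ^ 2 := Real.rpow_two x ▸ rfl
    have h3 : (x ^ (2:ℝ)) ^ (-(1/2 : ℝ)) = x⁻¹ := by
      rw [← Real.rpow_mul hx.le]
      norm_num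
      exact Real.rpow_neg_one x
    unfold chiSq1PDF
    rw [h1, h3, h2]
    rw [abs_of_nonneg (by norm_num : (0:ℝ) ≤ 2)]
    have : Real.exp (-x^2 / 2) = Real.exp (-(1/2) * x^2) := by ring_nf
    rw [this]
    have hsq : √(2 * π) ≠ 0 := by positivity
    rw [smul_eq_mul]
    field_simp [hx.ne']
  rw [setIntegral_congr_fun measurableSet_Ioi key]
  rw [MeasureTheory.integral_const_mul, MeasureTheory.integral_const_mul, integral_gaussian_Ioi]
  rw [show π / (1/2 : ℝ) = 2 * π by ring]
  rw [mul_comm, mul_assoc]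
  rw [show √(2*π) / 2 * 2 = √(2*π) by ring]
  exact inv_mul_cancel₀ (Real.sqrt_ne_zero'.mpr (by positivity))

lemma chiSq_integrableOn_Ioc {t : ℝ} (ht : 0 < t) : IntegrableOn chiSq1PDF (Ioc 0 t) := by
  have hbase : IntegrableOn (fun s : ℝ => s ^ (-(1/2 : ℝ))) (Ioc 0 t) := by
    have := intervalIntegral.intervalIntegrable_rpow' (a := 0) (b := t)
      (by norm_num : (-1:ℝ) < -(1/2))
    rwa [intervalIntegrable_iff_integrableOn_Ioc_of_le ht.le] at this
  refine (hbase.const_mul (Real.sqrt (2 * π))⁻¹).mono'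
    chiSq_measurable.aestronglyMeasurable.restrict ?_
  rw [ae_restrict_iff' measurableSet_Ioc]
  refine Eventually.of_forall fun s hs => ?_
  have hs0 : 0 < s := hs.1
  rw [Real.norm_eq_abs, abs_of_nonneg (chiSq_pos hs0).le]
  unfold chiSq1PDF
  have hc : (0:ℝ) ≤ (Real.sqrt (2*π))⁻¹ * s ^ (-(1/2:ℝ)) := by
    have := (Real.rpow_pos_of_pos hs0 (-(1/2:ℝ))).le
    positivity
  calc (Real.sqrt (2*π))⁻¹ * s ^ (-(1/2:ℝ)) * Real.exp (-s/2)
      ≤ (Real.sqrt (2*π))⁻¹ * s ^ (-(1/2:ℝ)) * 1 :=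
        mul_le_mul_of_nonneg_left (Real.exp_le_one_iff.mpr (by linarith)) hc
    _ = (Real.sqrt (2*π))⁻¹ * s ^ (-(1/2:ℝ)) := mul_one _
  
lemma chiSq_split {t : ℝ} (ht : 0 < t) :
    chiSq1CDF t + ∫ s in Ioi t, chiSq1PDF s = 1 := by
  rw [← chiSq_total_mass, ← Ioc_union_Ioi_eq_Ioi ht.le]
  rw [setIntegral_union (Ioc_disjoint_Ioi le_rfl) measurableSet_Ioi
    (chiSq_integrableOn_Ioc ht) (chiSq_integrableOn_Ioi ht)]
  rfl

/-- `ξ(t)/φ(Φ⁻¹(1 - Ξ(t))) → 0` as `t → ∞`. -/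
theorem chiSq_normal_ratio_tendsto_atTop :
    Tendsto (fun t => chiSq1PDF t /
        stdNormalPDF (Function.invFun stdNormalCDF (1 - chiSq1CDF t)))
      atTop (nhds 0) := by
  set u : ℝ → ℝ := fun t => 1 - chiSq1CDF t with hu_def
  set q : ℝ → ℝ := fun t => Function.invFun stdNormalCDF (u t) with hq_def
  -- basic tail identities
  have hu_tail : ∀ t : ℝ, 0 < t → u t = ∫ s in Ioi t, chiSq1PDF s := by
    intro t ht
    have := chiSq_split ht
    simp only [hu_def]
    linarith
  have hu_lower : ∀ t : ℝ, 0 < t → t / (t + 1) * (2 * chiSq1PDF t) ≤ u t := by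
    intro t ht
    rw [hu_tail t ht]; exact chiSq_tail_lower ht
  have hu_upper : ∀ t : ℝ, 0 < t → u t ≤ 2 * chiSq1PDF t := by
    intro t ht
    rw [hu_tail t ht]; exact chiSq_tail_upper ht
  have hu_pos : ∀ t : ℝ, 0 < t → 0 < u t := by
    intro t ht
    refine lt_of_lt_of_le ?_ (hu_lower t ht)
    have := chiSq_pos ht
    positivity
  -- u tends to 0
  have h2chi : Tendsto (fun t => 2 * chiSq1PDF t) atTop (nhds 0) := by
    simpa using chiSq_tendsto_atTop.const_mul (2:ℝ)
  have hu_tendsto : Tendsto u atTop (nhds 0) := by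
    apply squeeze_zero' ?_ ?_ h2chi
    · filter_upwards [eventually_gt_atTop (0:ℝ)] with t ht
      exact (hu_pos t ht).le
    · filter_upwards [eventually_gt_atTop (0:ℝ)] with t ht
      exact hu_upper t ht
  -- the good event
  have hE : ∀ᶠ t in atTop, 0 < t ∧ u t < 1 := by
    filter_upwards [eventually_gt_atTop (0:ℝ),
      h2chi.eventually_lt_const (by norm_num : (0:ℝ) < 1)] with t ht h2
    exact ⟨ht, lt_of_le_of_lt (hu_upper t ht) h2⟩
  have hq_eq : ∀ t : ℝ, 0 < t → u t < 1 → stdNormalCDF (q t) = u t := by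
    intro t ht h1
    obtain ⟨x, hx⟩ := cdf_surj (hu_pos t ht) h1
    exact Function.invFun_eq ⟨x, hx⟩
  -- q tends to -infty
  have hq_tendsto : Tendsto q atTop atBot := by
    rw [tendsto_atBot]
    intro M
    filter_upwards [hE, hu_tendsto.eventually_lt_const (cdf_pos M)] with t ⟨ht, h1⟩ h2
    have := hq_eq t ht h1
    have hlt : stdNormalCDF (q t) < stdNormalCDF M := by rw [this]; exact h2
    exact (cdf_strictMono.lt_iff_lt.mp hlt).le
  -- bound function
  have hB : Tendsto (fun t => (t + 1) / (2 * t) * (-(q t))⁻¹) atTop (nhds 0) := by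
    have h1 : Tendsto (fun t : ℝ => (t + 1) / (2 * t)) atTop (nhds (1/2)) := by
      have h2 : Tendsto (fun t : ℝ => 1/2 + (2 * t)⁻¹) atTop (nhds (1/2 + 0)) := by
        apply tendsto_const_nhds.add
        apply Tendsto.inv_tendsto_atTop
        exact Tendsto.const_mul_atTop (by norm_num) tendsto_id
      rw [add_zero] at h2
      apply h2.congr'
      filter_upwards [eventually_gt_atTop (0:ℝ)] with t ht
      field_simp
    have h2 : Tendsto (fun t => (-(q t))⁻¹) atTop (nhds 0) := by
      apply Tendsto.inv_tendsto_atTop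
      exact tendsto_neg_atTop_iff.mpr hq_tendsto
    have := h1.mul h2
    norm_num at this ⊢
    exact this
  -- final squeeze
  have hmain : ∀ᶠ t in atTop,
      chiSq1PDF t / stdNormalPDF (q t) ≤ (t + 1) / (2 * t) * (-(q t))⁻¹ := by
    filter_upwards [hE, hq_tendsto.eventually_le_atBot (-1)] with t ⟨ht, h1⟩ hqneg
    have hqlt : q t < 0 := lt_of_le_of_lt hqneg (by norm_num)
    have hqpos : (0:ℝ) < -(q t) := by linarith
    have hxi : 0 < chiSq1PDF t := chiSq_pos ht
    have hden : (-(q t)) * (t / (t + 1) * (2 * chiSq1PDF t)) ≤ stdNormalPDF (q t) := by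
      calc (-(q t)) * (t / (t + 1) * (2 * chiSq1PDF t))
          ≤ (-(q t)) * u t :=
            mul_le_mul_of_nonneg_left (hu_lower t ht) hqpos.le
        _ = (-(q t)) * stdNormalCDF (q t) := by rw [hq_eq t ht h1]
        _ ≤ stdNormalPDF (q t) := mills (q t) hqlt
    have hdenpos : 0 < (-(q t)) * (t / (t + 1) * (2 * chiSq1PDF t)) := by
      have h3 : (0:ℝ) < t / (t+1) := by positivity
      positivity
    calc chiSq1PDF t / stdNormalPDF (q t)
        ≤ chiSq1PDF t / ((-(q t)) * (t / (t + 1) * (2 * chiSq1PDF t))) :=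
          div_le_div_of_nonneg_left hxi.le hdenpos hden
      _ = (t + 1) / (2 * t) * (-(q t))⁻¹ := by
          rw [div_eq_iff hdenpos.ne', mul_comm]
          field_simp [hxi.ne', hqlt.ne]
  apply squeeze_zero' ?_ hmain hB
  filter_upwards [eventually_gt_atTop (0:ℝ)] with t ht
  exact div_nonneg (chiSq_pos ht).le (pdf_pos _).le
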